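/- Let (A, m, k) be a one-dimensional local Noetherian domain that is not regular, and let Ā denote the integral closure of A in its field of fractions. Assume Ā is a finite A-module. Then dim_k Ext^1_A(k, A) ≤ length_A(Ā/A). In other words, the Cohen-Macaulay type of A is at most the delta-invariant of A. -/

import Mathlib

set_option synthInstance.maxHeartbeats 1000000
set_option maxHeartbeats 1000000

open CategoryTheory IsLocalRing

/-- The length of a module, expressed as the Krull dimension (longest chain length) of its
lattice of submodules. -/
noncomputable def moduleLength (R M : Type) [CommRing R] [AddCommGroup M] [Module R M] :
    WithBot ℕ∞ :=
  Order.krullDim (Submodule R M)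

set_option linter.unusedSectionVars false

noncomputable section TypeLeDeltaAux

open Limits

namespace TypeLeDelta

variable (A : Type) [CommRing A] [IsLocalRing A]

instance : Projective (ModuleCat.of A A) :=
  (IsProjective.iff_projective A).mp inferInstance

/-- The augmentation `A → k`. -/
def pi0 : ModuleCat.of A A ⟶ ModuleCat.of A (ResidueField A) :=
  ModuleCat.ofHom (Algebra.linearMap A (ResidueField A))

instance : Epi (pi0 A) :=
  (ModuleCat.epi_iff_surjective _).mpr
    (show Function.Surjective ⇑(Algebra.linearMap A (ResidueField A)) from
      Ideal.Quotient.mk_surjective : Function.Surjective (pi0 A).hom)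

/-- An explicit start of a free resolution of the residue field. -/
def resComplex : ChainComplex (ModuleCat A) ℕ :=
  ChainComplex.mk' (ModuleCat.of A A) (Projective.syzygies (pi0 A)) (Projective.d (pi0 A))
    (fun f => ⟨_, Projective.d f, by erw [Category.assoc, kernel.condition, comp_zero]⟩)

lemma resComplex_d_1_0 :
    (resComplex A).d 1 0 = Projective.d (pi0 A) := by
  simp [resComplex]

lemma resComplex_exactAt_succ (n : ℕ) :
    (resComplex A).ExactAt (n + 1) := by
  rw [HomologicalComplex.exactAt_iff' _ (n + 1 + 1) (n + 1) n (by simp) (by simp)]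
  dsimp [resComplex, HomologicalComplex.sc', HomologicalComplex.shortComplexFunctor',
      ChainComplex.mk', ChainComplex.mk]
  simp only [ChainComplex.of.d]
  match n with
  | 0 => apply CategoryTheory.exact_d_f
  | n + 1 => apply CategoryTheory.exact_d_f

instance (n : ℕ) : Projective ((resComplex A).X n) := by
  obtain (_ | _ | _ | n) := n
  · show Projective (ModuleCat.of A A); infer_instance
  · apply Projective.projective_over
  · apply Projective.projective_over
  · apply Projective.projective_over

/-- The explicit projective resolution of the residue field. -/
def res : ProjectiveResolution (ModuleCat.of A (ResidueField A)) where
  complex := resComplex A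
  π := (ChainComplex.toSingle₀Equiv _ _).symm ⟨pi0 A, by
          erw [resComplex_d_1_0, Category.assoc, kernel.condition, Limits.comp_zero]⟩
  quasiIso := ⟨fun n => by
    cases n
    · rw [ChainComplex.quasiIsoAt₀_iff, ShortComplex.quasiIso_iff_of_zeros']
      · refine (ShortComplex.exact_and_epi_g_iff_of_iso ?_).2
          ⟨CategoryTheory.exact_d_f (pi0 A), by dsimp; infer_instance⟩
        exact ShortComplex.isoMk (Iso.refl _) (Iso.refl _) (Iso.refl _)
          (by simp [resComplex]; rfl) (by simp; rfl)
      all_goals rfl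
    · rw [quasiIsoAt_iff_exactAt']
      · apply resComplex_exactAt_succ
      · apply ChainComplex.exactAt_succ_single_obj⟩


/-- The first differential, viewed as a linear map to `A`. -/
def d10 : ((resComplex A).X 1) →ₗ[A] A := ((resComplex A).d 1 0).hom

lemma d10_mem (u : (resComplex A).X 1) : d10 A u ∈ maximalIdeal A := by
  have h : (resComplex A).d 1 0 ≫ pi0 A = 0 := by
    rw [resComplex_d_1_0]
    erw [Category.assoc, kernel.condition, comp_zero]
  have h2 : residue A (d10 A u) = 0 := LinearMap.congr_fun (ModuleCat.hom_ext_iff.mp h) u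
  exact (IsLocalRing.residue_eq_zero_iff _).mp h2

lemma exists_d10_eq {x : A} (hx : x ∈ maximalIdeal A) :
    ∃ u : (resComplex A).X 1, d10 A u = x := by
  have hex := (ShortComplex.moduleCat_exact_iff _).mp (CategoryTheory.exact_d_f (pi0 A)) x
    (by exact (IsLocalRing.residue_eq_zero_iff x).mpr hx)
  obtain ⟨u, hu⟩ := hex
  refine ⟨u, ?_⟩
  show ((resComplex A).d 1 0).hom u = x
  rw [resComplex_d_1_0]
  exact hu

lemma exists_d21_eq {u : (resComplex A).X 1} (hu : d10 A u = 0) :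
    ∃ v : (resComplex A).X 2, (resComplex A).d 2 1 v = u := by
  have h := resComplex_exactAt_succ A 0
  rw [HomologicalComplex.exactAt_iff' _ 2 1 0 (by simp) (by simp)] at h
  exact (ShortComplex.moduleCat_exact_iff _).mp h u (by exact hu)


section Domain

variable [IsDomain A] [IsNoetherianRing A]

/-- `ψ(w)/a ∈ Q(A)`. -/
def qel (a : A) (w : (resComplex A).X 1) (ψ : (resComplex A).X 1 ⟶ ModuleCat.of A A) :
    FractionRing A :=
  algebraMap A (FractionRing A) (ψ w) * (algebraMap A (FractionRing A) a)⁻¹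

variable {A}
variable {a : A} {w : (resComplex A).X 1} {ψ : (resComplex A).X 1 ⟶ ModuleCat.of A A}
  (ha0 : a ≠ 0) (hw : d10 A w = a) (hψ : (resComplex A).d 2 1 ≫ ψ = 0)

include hψ in
/-- ψ kills the kernel of d10. -/
lemma psi_ker {z : (resComplex A).X 1} (hz : d10 A z = 0) : ψ z = 0 := by
  obtain ⟨v, hv⟩ := exists_d21_eq A hz
  have := LinearMap.congr_fun (ModuleCat.hom_ext_iff.mp hψ) v
  simp only [ModuleCat.hom_comp, LinearMap.comp_apply] at this
  rw [← hv]
  simpa using this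

include ha0 hw hψ in
/-- The key computation: `x · (ψ(w)/a) = ψ(u)` whenever `d10 u = x`. -/
lemma key (u : (resComplex A).X 1) :
    algebraMap A (FractionRing A) (d10 A u) * qel A a w ψ
      = algebraMap A (FractionRing A) (ψ u) := by
  have hz : d10 A (a • u - (d10 A u) • w) = 0 := by
    simp only [map_sub, map_smul, hw, smul_eq_mul]
    ring
  have h0 : ψ (a • u - (d10 A u) • w) = 0 := psi_ker hψ hz
  have h1 : a * (show A from ψ u) = d10 A u * (show A from ψ w) := by
    have h0' : a • (ψ u) - (d10 A u) • (ψ w) = 0 := by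
      rw [← map_smul, ← map_smul, ← map_sub]
      exact h0
    rw [sub_eq_zero] at h0'
    exact h0'
  have ha0' : algebraMap A (FractionRing A) a ≠ 0 := by
    simpa using ha0
  rw [qel]
  field_simp
  rw [← map_mul, ← map_mul]
  congr 1
  rw [← h1]


include ha0 hw hψ in
/-- Assuming `m` is not principal, `ψ(w)/a` is integral over `A`. -/
lemma qel_integral (hreg : ¬ (maximalIdeal A).IsPrincipal) :
    qel A a w ψ ∈ integralClosure A (FractionRing A) := by
  by_cases hcase : ∀ u : (resComplex A).X 1, (show A from ψ u) ∈ maximalIdeal A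
  · -- the determinant trick
    have ha : a ∈ maximalIdeal A := hw ▸ d10_mem A w
    refine isIntegral_of_smul_mem_submodule
      (Submodule.map (Algebra.linearMap A (FractionRing A)) (maximalIdeal A)) ?_ ?_ _ ?_
    · refine Submodule.ne_bot_iff _ |>.mpr ⟨algebraMap A (FractionRing A) a,
        ⟨a, ha, rfl⟩, ?_⟩
      simpa using ha0
    · exact Submodule.FG.map _ (IsNoetherian.noetherian _)
    · rintro n ⟨x, hx, rfl⟩
      obtain ⟨u, hu⟩ := exists_d10_eq A hx
      refine ⟨show A from ψ u, hcase u, ?_⟩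
      have k := key ha0 hw hψ u
      rw [hu] at k
      simpa [smul_eq_mul, mul_comm] using k.symm
  · exfalso
    push_neg at hcase
    obtain ⟨u, hu⟩ := hcase
    have hunit : IsUnit (show A from ψ u) := by
      by_contra h
      exact hu (IsLocalRing.mem_maximalIdeal _ |>.mpr h)
    obtain ⟨cu, hcu⟩ := hunit
    refine hreg ⟨⟨d10 A u, ?_⟩⟩
    refine le_antisymm ?_ ((Ideal.span_singleton_le_iff_mem _).mpr (d10_mem A u))
    intro y hy
    obtain ⟨uy, huy⟩ := exists_d10_eq A hy
    have k1 := key ha0 hw hψ u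
    have k2 := key ha0 hw hψ uy
    rw [huy] at k2
    have hQ : algebraMap A (FractionRing A) (y * (show A from ψ u))
        = algebraMap A (FractionRing A) (d10 A u * (show A from ψ uy)) := by
      rw [map_mul, map_mul, ← k1, ← k2]
      ring
    have hyc : y * (show A from ψ u) = d10 A u * (show A from ψ uy) :=
      IsFractionRing.injective A (FractionRing A) hQ
    rw [← hcu] at hyc
    refine Ideal.mem_span_singleton.mpr ⟨↑cu⁻¹ * (show A from ψ uy), ?_⟩
    calc y = y * (↑cu * ↑cu⁻¹) := by rw [Units.mul_inv, mul_one]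
      _ = (y * ↑cu) * ↑cu⁻¹ := by ring
      _ = (d10 A u * (show A from ψ uy)) * ↑cu⁻¹ := by rw [hyc]
      _ = d10 A u * (↑cu⁻¹ * (show A from ψ uy)) := by ring

include ha0 hw hψ in
/-- If `ψ(w)/a` lies in `A`, then `ψ` is a multiple of `d10`. -/
lemma qel_mem_bot {c : A} (hc : qel A a w ψ = algebraMap A (FractionRing A) c)
    (v : (resComplex A).X 1) : (show A from ψ v) = c * d10 A v := by
  have k := key ha0 hw hψ v
  rw [hc, ← map_mul] at k
  have := IsFractionRing.injective A (FractionRing A) k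
  rw [← this]
  ring

include ha0 hw in
/-- The value of `qel` on a boundary. -/
lemma qel_boundary (t : A →ₗ[A] A) :
    qel A a w ((resComplex A).d 1 0 ≫ ModuleCat.ofHom t)
      = algebraMap A (FractionRing A) (t 1) := by
  have ha0' : algebraMap A (FractionRing A) a ≠ 0 := by simpa using ha0
  have h1 : qel A a w ((resComplex A).d 1 0 ≫ ModuleCat.ofHom t)
      = algebraMap A (FractionRing A) (t a) * (algebraMap A (FractionRing A) a)⁻¹ := by
    rw [qel]
    congr 2
    show t (d10 A w) = t a
    rw [hw]
  have h2 : t a = a * t 1 := by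
    conv_lhs => rw [show a = a • (1 : A) by simp]
    rw [map_smul, smul_eq_mul]
  rw [h1, h2]
  field_simp
  exact map_mul _ _ _


lemma qel_add (ψ₁ ψ₂ : (resComplex A).X 1 ⟶ ModuleCat.of A A) :
    qel A a w (ψ₁ + ψ₂) = qel A a w ψ₁ + qel A a w ψ₂ := by
  simp only [qel]
  rw [← add_mul, ← map_add]
  rfl

lemma qel_smul (c : A) (ψ₁ : (resComplex A).X 1 ⟶ ModuleCat.of A A) :
    qel A a w (c • ψ₁) = c • qel A a w ψ₁ := by
  simp only [qel]
  rw [Algebra.smul_def, ← mul_assoc, ← map_mul]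
  rfl

end Domain

/-- The Hom-complex `Hom(P_•, A)`. -/
abbrev homCx : CochainComplex (ModuleCat A) ℕ :=
  (resComplex A).linearYonedaObj A (ModuleCat.of A A)

/-- Its short complex in degrees `0,1,2`. -/
abbrev homSC : ShortComplex (ModuleCat A) := (homCx A).sc' 0 1 2

lemma homSC_g_eq_zero_iff (ψ : (resComplex A).X 1 ⟶ ModuleCat.of A A) :
    (homSC A).g ψ = 0 ↔ (resComplex A).d 2 1 ≫ ψ = 0 := by
  constructor <;> intro h <;> exact h

lemma homSC_f_apply (θ : ModuleCat.of A A ⟶ ModuleCat.of A A) :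
    (homSC A).f θ = (resComplex A).d 1 0 ≫ θ := rfl

/-- `Ext¹(k, A)` is the homology of the concrete short complex. -/
def extIso : ((Ext A (ModuleCat A) 1).obj
      (Opposite.op (ModuleCat.of A (ResidueField A)))).obj (ModuleCat.of A A)
    ≅ (homSC A).moduleCatLeftHomologyData.H :=
  (res A).isoExt 1 (ModuleCat.of A A) ≪≫
    ShortComplex.homologyMapIso ((homCx A).isoSc' 0 1 2 (by simp) (by simp)) ≪≫
    (homSC A).moduleCatHomologyIso

end TypeLeDelta

lemma moduleLength_eq_of_linearEquiv {R M N : Type} [CommRing R] [AddCommGroup M]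
    [AddCommGroup N] [Module R M] [Module R N] (e : M ≃ₗ[R] N) :
    moduleLength R M = moduleLength R N :=
  Order.krullDim_eq_of_orderIso (Submodule.orderIsoMapComap e)

lemma moduleLength_le_of_injective {R M N : Type} [CommRing R] [AddCommGroup M]
    [AddCommGroup N] [Module R M] [Module R N] (f : M →ₗ[R] N)
    (hf : Function.Injective f) :
    moduleLength R M ≤ moduleLength R N :=
  Order.krullDim_le_of_strictMono (Submodule.map f)
    (Submodule.map_strictMono_of_injective hf)

end TypeLeDeltaAux

open TypeLeDelta in
theorem type_le_delta
    (A : Type) [CommRing A] [IsLocalRing A] [IsNoetherianRing A] [IsDomain A]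
    (hdim : ringKrullDim A = 1)
    (hreg : ¬ (maximalIdeal A).IsPrincipal)
    [Module.Finite A (integralClosure A (FractionRing A))] :
    moduleLength A (((Ext A (ModuleCat A) 1).obj
        (Opposite.op (ModuleCat.of A (ResidueField A)))).obj (ModuleCat.of A A)) ≤
      moduleLength A
        ((integralClosure A (FractionRing A)) ⧸
          (LinearMap.range (Algebra.linearMap A (integralClosure A (FractionRing A))))) := by
  classical
  have hmbot : maximalIdeal A ≠ ⊥ := by
    intro h
    exact hreg ⟨⟨0, by rw [h, Submodule.span_zero_singleton]⟩⟩
  obtain ⟨a, ha, ha0⟩ := (Submodule.ne_bot_iff _).mp hmbot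
  obtain ⟨w, hw⟩ := exists_d10_eq A ha
  set B := integralClosure A (FractionRing A) with hB
  let φB : LinearMap.ker (homSC A).g.hom →ₗ[A] B :=
    { toFun := fun ψ =>
        ⟨qel A a w ψ.1, qel_integral ha0 hw ((homSC_g_eq_zero_iff A ψ.1).mp (by exact ψ.2)) hreg⟩
      map_add' := fun ψ₁ ψ₂ => Subtype.ext (qel_add ψ₁.1 ψ₂.1)
      map_smul' := fun c ψ₁ => Subtype.ext (qel_smul c ψ₁.1) }
  let Φ₀ := (LinearMap.range (Algebra.linearMap A B)).mkQ.comp φB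
  have hvan : LinearMap.range (homSC A).moduleCatToCycles ≤ LinearMap.ker Φ₀ := by
    rintro x ⟨θ, rfl⟩
    have ht : ∃ t : A →ₗ[A] A, ModuleCat.ofHom t = θ := ⟨θ.hom, rfl⟩
    obtain ⟨t, rfl⟩ := ht
    simp only [Φ₀, LinearMap.mem_ker, LinearMap.comp_apply, Submodule.mkQ_apply,
      Submodule.Quotient.mk_eq_zero]
    refine ⟨t 1, Subtype.ext ?_⟩
    show algebraMap A (FractionRing A) (t 1)
      = qel A a w ((homSC A).f (ModuleCat.ofHom t))
    rw [homSC_f_apply]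
    exact (qel_boundary ha0 hw t).symm
  let Φ := Submodule.liftQ (LinearMap.range (homSC A).moduleCatToCycles) Φ₀ hvan
  have hinj : Function.Injective Φ := by
    rw [← LinearMap.ker_eq_bot]
    apply Submodule.ker_liftQ_eq_bot
    intro ψ hk
    simp only [Φ₀, LinearMap.mem_ker, LinearMap.comp_apply, Submodule.mkQ_apply,
      Submodule.Quotient.mk_eq_zero] at hk
    obtain ⟨c, hc⟩ := hk
    have hcQ : qel A a w ψ.1 = algebraMap A (FractionRing A) c := by
      have h2 := congrArg Subtype.val hc
      exact h2.symm
    have h4 : ((resComplex A).d 1 0 ≫ ModuleCat.ofHom ((c : A) • (LinearMap.id : A →ₗ[A] A))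
        : (resComplex A).X 1 ⟶ ModuleCat.of A A) = ψ.1 := by
      refine ModuleCat.hom_ext (LinearMap.ext ?_)
      intro v
      have h3 := qel_mem_bot ha0 hw ((homSC_g_eq_zero_iff A ψ.1).mp (by exact ψ.2)) hcQ v
      exact h3.symm
    refine ⟨ModuleCat.ofHom ((c : A) • (LinearMap.id : A →ₗ[A] A)), Subtype.ext ?_⟩
    show (homSC A).f (ModuleCat.ofHom ((c : A) • (LinearMap.id : A →ₗ[A] A))) = ψ.1
    rw [homSC_f_apply]
    exact h4
  have e1 : moduleLength A (((Ext A (ModuleCat A) 1).obj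
        (Opposite.op (ModuleCat.of A (ResidueField A)))).obj (ModuleCat.of A A))
      = moduleLength A ((homSC A).moduleCatLeftHomologyData.H) :=
    moduleLength_eq_of_linearEquiv (extIso A).toLinearEquiv
  have e2 : moduleLength A ((homSC A).moduleCatLeftHomologyData.H)
      ≤ moduleLength A (B ⧸ (LinearMap.range (Algebra.linearMap A B))) :=
    moduleLength_le_of_injective Φ hinj
  exact le_trans (le_of_eq e1) e2
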